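/- Vanishing of the quantum force average: let ρ : ℝ^n → (0,∞) be a smooth probability density that is Schwartz (together with all derivatives decaying rapidly), and let Q := −(ħ²/2m)(Δ√ρ)/√ρ. Then ∫_{ℝ^n} ρ(x) ∇Q(x) dx = 0. -/

import Mathlib

open MeasureTheory

/-- Partial derivative `∂f/∂x_i` of a scalar function on ℝⁿ. -/
noncomputable def pd {n : ℕ} (i : Fin n) (f : (Fin n → ℝ) → ℝ) (x : Fin n → ℝ) : ℝ :=
  fderiv ℝ f x (Pi.single i 1)

/-- Divergence `∑ i ∂X_i/∂x_i` of a vector field on ℝⁿ. -/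
noncomputable def dvg {n : ℕ} (X : (Fin n → ℝ) → (Fin n → ℝ)) (x : Fin n → ℝ) : ℝ :=
  ∑ i, pd i (fun y => X y i) x

/-- Lie bracket `[V,W] = (DW)V − (DV)W` of vector fields on ℝⁿ. -/
noncomputable def lie {n : ℕ} (V W : (Fin n → ℝ) → (Fin n → ℝ)) (x : Fin n → ℝ) :
    Fin n → ℝ :=
  fun k => ∑ l, (V x l * pd l (fun y => W y k) x - W x l * pd l (fun y => V y k) x)

namespace Helper

variable {n : ℕ}

lemma top_add_one : ((⊤:ℕ∞) : WithTop ℕ∞) + 1 ≤ ((⊤:ℕ∞) : WithTop ℕ∞) := by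
  exact_mod_cast le_of_eq (by simp)

lemma one_le_top : (1 : WithTop ℕ∞) ≤ ((⊤:ℕ∞) : WithTop ℕ∞) := by exact_mod_cast le_top

lemma contDiff_fderiv_top {f : (Fin n → ℝ) → ℝ} (hf : ContDiff ℝ (⊤:ℕ∞) f) :
    ContDiff ℝ (⊤:ℕ∞) (fderiv ℝ f) := hf.fderiv_right top_add_one

lemma contDiff_pd {f : (Fin n → ℝ) → ℝ} (hf : ContDiff ℝ (⊤:ℕ∞) f) (i : Fin n) :
    ContDiff ℝ (⊤:ℕ∞) (pd i f) :=
  (contDiff_fderiv_top hf).clm_apply contDiff_const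

lemma diff_of_top {F : Type*} [NormedAddCommGroup F] [NormedSpace ℝ F]
    {f : (Fin n → ℝ) → F} (hf : ContDiff ℝ (⊤:ℕ∞) f) :
    Differentiable ℝ f := hf.differentiable (by simp)

lemma pd_mul {f g : (Fin n → ℝ) → ℝ} {x : Fin n → ℝ} (hf : DifferentiableAt ℝ f x)
    (hg : DifferentiableAt ℝ g x) (i : Fin n) :
    pd i (fun y => f y * g y) x = f x * pd i g x + pd i f x * g x := by
  simp only [pd, fderiv_fun_mul hf hg]
  simp [mul_comm]

lemma pd_add {f g : (Fin n → ℝ) → ℝ} {x : Fin n → ℝ} (hf : DifferentiableAt ℝ f x)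
    (hg : DifferentiableAt ℝ g x) (i : Fin n) :
    pd i (fun y => f y + g y) x = pd i f x + pd i g x := by
  simp [pd, fderiv_fun_add hf hg]

lemma pd_sub {f g : (Fin n → ℝ) → ℝ} {x : Fin n → ℝ} (hf : DifferentiableAt ℝ f x)
    (hg : DifferentiableAt ℝ g x) (i : Fin n) :
    pd i (fun y => f y - g y) x = pd i f x - pd i g x := by
  simp [pd, fderiv_fun_sub hf hg]

lemma pd_const_mul {f : (Fin n → ℝ) → ℝ} {x : Fin n → ℝ} (hf : DifferentiableAt ℝ f x)
    (c : ℝ) (i : Fin n) :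
    pd i (fun y => c * f y) x = c * pd i f x := by
  simp [pd, fderiv_const_mul hf c]

lemma pd_inv {g : (Fin n → ℝ) → ℝ} {x : Fin n → ℝ}
    (hg : DifferentiableAt ℝ g x) (hgx : g x ≠ 0) (i : Fin n) :
    pd i (fun y => (g y)⁻¹) x = -pd i g x / (g x) ^ 2 := by
  have h : HasFDerivAt (fun y => (g y)⁻¹) ((-(g x ^ 2)⁻¹) • fderiv ℝ g x) x :=
    (hasDerivAt_inv hgx).comp_hasFDerivAt x hg.hasFDerivAt
  simp only [pd, h.fderiv]
  simp
  ring

lemma pd_div {f g : (Fin n → ℝ) → ℝ} {x : Fin n → ℝ} (hf : DifferentiableAt ℝ f x)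
    (hg : DifferentiableAt ℝ g x) (hgx : g x ≠ 0) (i : Fin n) :
    pd i (fun y => f y / g y) x
      = (pd i f x * g x - f x * pd i g x) / (g x) ^ 2 := by
  have h1 : pd i (fun y => f y * (g y)⁻¹) x
      = f x * pd i (fun y => (g y)⁻¹) x + pd i f x * (g x)⁻¹ :=
    pd_mul hf (hg.inv hgx) i
  simp only [div_eq_mul_inv]
  rw [h1, pd_inv hg hgx]
  field_simp
  ring

lemma pd_div_const {f : (Fin n → ℝ) → ℝ} {x : Fin n → ℝ}
    (hf : DifferentiableAt ℝ f x) (c : ℝ) (i : Fin n) :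
    pd i (fun y => f y / c) x = pd i f x / c := by
  have : (fun y => f y / c) = fun y => c⁻¹ * f y := by
    funext y; rw [div_eq_inv_mul]
  rw [this, pd_const_mul hf, div_eq_inv_mul]

lemma pd_sum {s : Finset (Fin n)} {F : Fin n → (Fin n → ℝ) → ℝ} {x : Fin n → ℝ}
    (hF : ∀ j ∈ s, DifferentiableAt ℝ (F j) x) (i : Fin n) :
    pd i (fun y => ∑ j ∈ s, F j y) x = ∑ j ∈ s, pd i (F j) x := by
  simp [pd, fderiv_fun_sum hF]

lemma pd_pd {f : (Fin n → ℝ) → ℝ} (hf : ContDiff ℝ (⊤:ℕ∞) f) (i j : Fin n) (x : Fin n → ℝ) :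
    pd i (pd j f) x = (fderiv ℝ (fderiv ℝ f) x) (Pi.single i 1) (Pi.single j 1) := by
  have hd : DifferentiableAt ℝ (fderiv ℝ f) x := (diff_of_top (contDiff_fderiv_top hf)) x
  have h := fderiv_clm_apply hd (differentiableAt_const (Pi.single j (1:ℝ)))
  change fderiv ℝ (fun y => (fderiv ℝ f y) (Pi.single j 1)) x (Pi.single i 1) = _
  rw [h]
  simp

lemma pd_comm {f : (Fin n → ℝ) → ℝ} (hf : ContDiff ℝ (⊤:ℕ∞) f) (i j : Fin n) (x : Fin n → ℝ) :
    pd i (pd j f) x = pd j (pd i f) x := by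
  rw [pd_pd hf, pd_pd hf]
  exact second_derivative_symmetric
    (fun y => ((diff_of_top hf) y).hasFDerivAt)
    ((diff_of_top (contDiff_fderiv_top hf)) x).hasFDerivAt _ _

lemma diffAt_div {f g : (Fin n → ℝ) → ℝ} {x : Fin n → ℝ} (hf : DifferentiableAt ℝ f x)
    (hg : DifferentiableAt ℝ g x) (hgx : g x ≠ 0) :
    DifferentiableAt ℝ (fun y => f y / g y) x := by
  simp only [div_eq_mul_inv]
  exact hf.mul (hg.inv hgx)

end Helper

-- key pointwise identity
section Key
variable {n : ℕ}

/-- the vector field whose divergence is `ρ ∂ₖQ` (up to the constant `-ℏ²/2m`). -/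
noncomputable def FF (ρ : (Fin n → ℝ) → ℝ) (k i : Fin n) : (Fin n → ℝ) → ℝ :=
  fun y => pd i (pd k ρ) y / 2 - pd i ρ y * pd k ρ y / (2 * ρ y)

open Helper

lemma key_pointwise (ℏ m : ℝ)
    (ρ : SchwartzMap (Fin n → ℝ) ℝ)
    (hρ0 : ∀ x, 0 < ρ x)
    (Q : (Fin n → ℝ) → ℝ)
    (hQ : ∀ x, Q x = -(ℏ ^ 2 / (2 * m)) *
      ((∑ i, pd i (fun z => pd i (fun w => Real.sqrt (ρ w)) z) x)
        / Real.sqrt (ρ x)))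
    (k : Fin n) (x : Fin n → ℝ) :
    ρ x * pd k Q x = (-(ℏ ^ 2 / (2 * m))) * ∑ i, pd i (FF (⇑ρ) k i) x := by
  set c : ℝ := ℏ ^ 2 / (2 * m) with hc
  set u : (Fin n → ℝ) → ℝ := fun w => Real.sqrt (ρ w) with hu_def
  have hρs : ContDiff ℝ (⊤:ℕ∞) ⇑ρ := ρ.smooth ⊤
  have hu : ContDiff ℝ (⊤:ℕ∞) u := by
    rw [contDiff_iff_contDiffAt]
    intro y
    exact (Real.contDiffAt_sqrt (hρ0 y).ne').comp y hρs.contDiffAt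
  have hux : ∀ y, 0 < u y := fun y => Real.sqrt_pos.2 (hρ0 y)
  have hρu : ⇑ρ = fun y => u y * u y := by
    funext y
    exact (Real.mul_self_sqrt (hρ0 y).le).symm
  set S : (Fin n → ℝ) → ℝ := fun y => ∑ i, pd i (pd i u) y with hS_def
  have hS : ContDiff ℝ (⊤:ℕ∞) S :=
    ContDiff.sum fun i _ => contDiff_pd (contDiff_pd hu i) i
  have hQfun : Q = fun y => -c * (S y / u y) := by
    funext y
    exact hQ y
  -- first derivatives of ρ
  have hpdρ : ∀ j : Fin n, pd j ⇑ρ = fun y => u y * pd j u y + pd j u y * u y := by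
    intro j
    funext y
    rw [hρu]
    exact pd_mul (diff_of_top hu y) (diff_of_top hu y) j
  -- FF in terms of u
  have hFF : ∀ i : Fin n, FF (⇑ρ) k i
      = fun y => u y * pd i (pd k u) y - pd i u y * pd k u y := by
    intro i
    funext y
    have h2 : pd i (pd k ⇑ρ) y
        = (u y * pd i (pd k u) y + pd i u y * pd k u y)
          + (pd k u y * pd i u y + pd i (pd k u) y * u y) := by
      rw [hpdρ k]
      rw [pd_add (f := fun y => u y * pd k u y) (g := fun y => pd k u y * u y) ((diff_of_top hu y).mul (diff_of_top (contDiff_pd hu k) y))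
        ((diff_of_top (contDiff_pd hu k) y).mul (diff_of_top hu y)),
        pd_mul (diff_of_top hu y) (diff_of_top (contDiff_pd hu k) y),
        pd_mul (diff_of_top (contDiff_pd hu k) y) (diff_of_top hu y)]
    have h1i : pd i ⇑ρ y = u y * pd i u y + pd i u y * u y := by rw [hpdρ i]
    have h1k : pd k ⇑ρ y = u y * pd k u y + pd k u y * u y := by rw [hpdρ k]
    have hρy : ρ y = u y * u y := by rw [hρu]
    have huy := (hux y).ne'
    simp only [FF, h2, h1i, h1k, hρy]
    field_simp
    ring
  -- divergence of FF in terms of u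
  have hdivFF : ∀ i : Fin n, pd i (FF (⇑ρ) k i) x
      = u x * pd i (pd i (pd k u)) x - pd i (pd i u) x * pd k u x := by
    intro i
    rw [hFF i]
    rw [pd_sub (f := fun y => u y * pd i (pd k u) y) (g := fun y => pd i u y * pd k u y) ((diff_of_top hu x).mul (diff_of_top (contDiff_pd (contDiff_pd hu k) i) x))
      ((diff_of_top (contDiff_pd hu i) x).mul (diff_of_top (contDiff_pd hu k) x)),
      pd_mul (diff_of_top hu x) (diff_of_top (contDiff_pd (contDiff_pd hu k) i) x),
      pd_mul (diff_of_top (contDiff_pd hu i) x) (diff_of_top (contDiff_pd hu k) x)]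
    ring
  -- commuting third derivatives
  have hcomm : ∀ i : Fin n, pd i (pd i (pd k u)) x = pd k (pd i (pd i u)) x := by
    intro i
    have e1 : pd i (pd k u) = pd k (pd i u) := by
      funext y
      exact pd_comm hu i k y
    rw [e1]
    exact pd_comm (contDiff_pd hu i) i k x
  -- derivative of S
  have hpdkS : pd k S x = ∑ i, pd k (pd i (pd i u)) x := by
    rw [hS_def]
    exact pd_sum (fun j _ => diff_of_top (contDiff_pd (contDiff_pd hu j) j) x) k
  -- derivative of Q
  have hpdkQ : pd k Q x
      = -c * ((pd k S x * u x - S x * pd k u x) / (u x) ^ 2) := by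
    rw [hQfun]
    rw [pd_const_mul (diffAt_div (diff_of_top hS x) (diff_of_top hu x) (hux x).ne') (-c) k]
    rw [pd_div (diff_of_top hS x) (diff_of_top hu x) (hux x).ne']
  -- put it together
  rw [hpdkQ]
  have hsum : ∑ i, pd i (FF (⇑ρ) k i) x
      = ∑ i, (u x * pd k (pd i (pd i u)) x - pd i (pd i u) x * pd k u x) :=
    Finset.sum_congr rfl fun i _ => by rw [hdivFF i, hcomm i]
  have hSx : S x = ∑ i, pd i (pd i u) x := rfl
  rw [hsum, Finset.sum_sub_distrib, ← Finset.mul_sum, ← Finset.sum_mul, ← hpdkS, ← hSx]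
  have hρx : ρ x = u x * u x := by rw [hρu]
  have huxne := (hux x).ne'
  rw [hρx]
  field_simp
end Key

open Set

lemma abs_le_abs_of_uIcc {s t : ℝ} (hs : s ∈ Set.uIcc (0:ℝ) t) : |s| ≤ |t| := by
  rcases Set.mem_uIcc.1 hs with ⟨h1, h2⟩ | ⟨h1, h2⟩
  · rw [abs_of_nonneg h1, abs_of_nonneg (le_trans h1 h2)]; exact h2
  · rw [abs_of_nonpos h2, abs_of_nonpos (le_trans h1 h2)]; linarith

lemma landau {f f' f'' : ℝ → ℝ}
    (hf' : ∀ t ∈ Set.Icc (-1:ℝ) 1, HasDerivAt f (f' t) t)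
    (hf'' : ∀ t ∈ Set.Icc (-1:ℝ) 1, HasDerivAt f' (f'' t) t)
    (h0 : ∀ t ∈ Set.Icc (-1:ℝ) 1, 0 ≤ f t)
    {M : ℝ} (hM : ∀ t ∈ Set.Icc (-1:ℝ) 1, |f'' t| ≤ M) :
    (f' 0) ^ 2 ≤ 4 * f 0 * (M + f 0) := by
  have h0mem : (0:ℝ) ∈ Set.Icc (-1:ℝ) 1 := by constructor <;> norm_num
  have hM0 : 0 ≤ M := le_trans (abs_nonneg _) (hM 0 h0mem)
  have ha0 : 0 ≤ f 0 := h0 0 h0mem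
  have key : ∀ t ∈ Set.Icc (-1:ℝ) 1, 0 ≤ f 0 + t * f' 0 + M * t ^ 2 := by
    intro t ht
    have hsub : Set.uIcc (0:ℝ) t ⊆ Set.Icc (-1:ℝ) 1 :=
      (Set.ordConnected_Icc).uIcc_subset h0mem ht
    have h1 : ∀ s ∈ Set.uIcc (0:ℝ) t, ‖f' s - f' 0‖ ≤ M * |t| := by
      intro s hs
      have hsub2 : Set.uIcc (0:ℝ) s ⊆ Set.Icc (-1:ℝ) 1 :=
        (Set.ordConnected_Icc).uIcc_subset h0mem (hsub hs)
      have h2 := Convex.norm_image_sub_le_of_norm_hasDerivWithin_le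
        (f := f') (f' := f'') (C := M) (s := Set.uIcc (0:ℝ) s)
        (fun y hy => (hf'' y (hsub2 hy)).hasDerivWithinAt)
        (fun y hy => by simpa using hM y (hsub2 hy))
        (convex_uIcc _ _) Set.left_mem_uIcc Set.right_mem_uIcc
      have h3 : ‖f' s - f' 0‖ ≤ M * |s| := by simpa using h2
      exact h3.trans (by
        have := abs_le_abs_of_uIcc hs
        nlinarith [abs_nonneg s])
    have h4 := Convex.norm_image_sub_le_of_norm_hasDerivWithin_le
      (f := fun s => f s - s * f' 0) (f' := fun s => f' s - f' 0)
      (C := M * |t|) (s := Set.uIcc (0:ℝ) t)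
      (fun y hy => ((hf' y (hsub hy)).sub
        ((hasDerivAt_mul_const (f' 0)))).hasDerivWithinAt)
      (fun y hy => h1 y hy) (convex_uIcc _ _) Set.left_mem_uIcc Set.right_mem_uIcc
    have h5 : |f t - t * f' 0 - f 0| ≤ M * t ^ 2 := by
      have : ‖(f t - t * f' 0) - (f 0 - 0 * f' 0)‖ ≤ M * |t| * ‖t - 0‖ := by simpa using h4
      rw [Real.norm_eq_abs] at this
      calc |f t - t * f' 0 - f 0| = |(f t - t * f' 0) - (f 0 - 0 * f' 0)| := by ring_nf
        _ ≤ M * |t| * ‖t - 0‖ := this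
        _ = M * t ^ 2 := by rw [Real.norm_eq_abs, sub_zero, mul_assoc, ← abs_mul, abs_mul_self]; ring
    have h6 := h0 t ht
    have h7 := abs_le.1 h5
    nlinarith [h7.1, h7.2, h6]
  by_cases hp : f' 0 = 0
  · rw [hp]; nlinarith
  by_cases hcase : |f' 0| ≤ 2 * M
  · have hMpos : 0 < M := by
      have : 0 < |f' 0| := abs_pos.2 hp
      linarith
    have htmem : (-(f' 0 / (2 * M))) ∈ Set.Icc (-1:ℝ) 1 := by
      have h8 : |f' 0 / (2 * M)| ≤ 1 := by
        rw [abs_div]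
        rw [div_le_one (by positivity)]
        calc |f' 0| ≤ 2 * M := hcase
          _ ≤ |2 * M| := le_abs_self _
      have h9 := abs_le.1 h8
      constructor <;> [linarith [h9.2]; linarith [h9.1]]
    have h10 := key _ htmem
    have h11 : f 0 + (-(f' 0 / (2 * M))) * f' 0 + M * (-(f' 0 / (2 * M))) ^ 2
        = f 0 - (f' 0) ^ 2 / (4 * M) := by
      field_simp
      ring
    rw [h11] at h10
    have h12 : (f' 0) ^ 2 ≤ 4 * M * f 0 := by
      rw [sub_nonneg, div_le_iff₀ (by positivity)] at h10
      nlinarith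
    nlinarith
  · push_neg at hcase
    rcases lt_or_gt_of_ne hp with hneg | hpos
    · have htmem : (1:ℝ) ∈ Set.Icc (-1:ℝ) 1 := by constructor <;> norm_num
      have h10 := key 1 htmem
      rw [abs_of_neg hneg] at hcase
      nlinarith
    · have htmem : (-1:ℝ) ∈ Set.Icc (-1:ℝ) 1 := by constructor <;> norm_num
      have h10 := key (-1) htmem
      rw [abs_of_pos hpos] at hcase
      nlinarith

-- decay estimates
section Decay
variable {n : ℕ}
open Helper

lemma schwartz_bound (f : SchwartzMap (Fin n → ℝ) ℝ) (N : ℕ) :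
    ∃ C : ℝ, 0 < C ∧ ∀ x, |f x| ≤ C / (1 + ‖x‖) ^ N := by
  set C : ℝ := 2 ^ N * (Finset.Iic (N, 0)).sup (fun m => SchwartzMap.seminorm ℝ m.1 m.2) f with hC
  have hC0 : 0 ≤ C := mul_nonneg (by positivity) (apply_nonneg _ f)
  refine ⟨C + 1, by linarith, fun x => ?_⟩
  have h := SchwartzMap.one_add_le_sup_seminorm_apply (𝕜 := ℝ) (m := (N, 0))
    le_rfl le_rfl f x
  rw [norm_iteratedFDeriv_zero] at h
  have hx : 0 < (1 + ‖x‖) ^ N := by positivity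
  rw [le_div_iff₀ hx]
  calc |f x| * (1 + ‖x‖) ^ N = (1 + ‖x‖) ^ N * ‖f x‖ := by rw [Real.norm_eq_abs]; ring
    _ ≤ C := h
    _ ≤ C + 1 := by linarith

lemma pd_eq_pderiv (f : SchwartzMap (Fin n → ℝ) ℝ) (i : Fin n) :
    pd i ⇑f = ⇑(LineDeriv.lineDerivOpCLM ℝ (SchwartzMap (Fin n → ℝ) ℝ) (V := Fin n → ℝ) (F := SchwartzMap (Fin n → ℝ) ℝ) (Pi.single i (1:ℝ)) f) := by
  funext x
  simp only [pd, LineDeriv.lineDerivOpCLM_apply, SchwartzMap.lineDerivOp_apply_eq_fderiv]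

lemma line_hasDerivAt {g : (Fin n → ℝ) → ℝ} (hg : Differentiable ℝ g)
    (x v : Fin n → ℝ) (t : ℝ) :
    HasDerivAt (fun s : ℝ => g (x + s • v)) (fderiv ℝ g (x + t • v) v) t := by
  have h1 : HasDerivAt (fun s : ℝ => x + s • v) v t := by
    simpa using ((hasDerivAt_id t).smul_const v).const_add x
  exact (hg (x + t • v)).hasFDerivAt.comp_hasDerivAt t h1

lemma env_comp {C : ℝ} (hC : 0 < C) (N : ℕ) {x y : Fin n → ℝ} (h : ‖y - x‖ ≤ 1) :
    C / (1 + ‖y‖) ^ N ≤ C * 2 ^ N / (1 + ‖x‖) ^ N := by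
  have hx : (0:ℝ) < (1 + ‖x‖) ^ N := by positivity
  have hy : (0:ℝ) < (1 + ‖y‖) ^ N := by positivity
  rw [div_le_div_iff₀ hy hx]
  have h1 : ‖x‖ ≤ ‖y‖ + 1 := by
    have h2 : ‖x‖ - ‖y‖ ≤ ‖x - y‖ := norm_sub_norm_le x y
    have h3 : ‖x - y‖ = ‖y - x‖ := norm_sub_rev x y
    linarith
  have h2 : 1 + ‖x‖ ≤ 2 * (1 + ‖y‖) := by linarith [norm_nonneg y]
  calc C * (1 + ‖x‖) ^ N ≤ C * (2 * (1 + ‖y‖)) ^ N := by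
        gcongr
    _ = C * 2 ^ N * (1 + ‖y‖) ^ N := by rw [mul_pow]; ring

lemma pd_sq_le (ρ : SchwartzMap (Fin n → ℝ) ℝ) (hρ0 : ∀ x, 0 < ρ x) (j : Fin n)
    {Cjj : ℝ} (hCpos : 0 < Cjj) (N : ℕ)
    (hCjj : ∀ y, |(LineDeriv.lineDerivOpCLM ℝ (SchwartzMap (Fin n → ℝ) ℝ) (V := Fin n → ℝ) (F := SchwartzMap (Fin n → ℝ) ℝ) (Pi.single j (1:ℝ))
      (LineDeriv.lineDerivOpCLM ℝ (SchwartzMap (Fin n → ℝ) ℝ) (V := Fin n → ℝ) (F := SchwartzMap (Fin n → ℝ) ℝ) (Pi.single j (1:ℝ)) ρ)) y| ≤ Cjj / (1 + ‖y‖) ^ N)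
    (x : Fin n → ℝ) :
    (pd j ⇑ρ x) ^ 2 ≤ 4 * ρ x * (Cjj * 2 ^ N / (1 + ‖x‖) ^ N + ρ x) := by
  have hρs : ContDiff ℝ (⊤:ℕ∞) ⇑ρ := ρ.smooth ⊤
  have hnorm_e : ‖(Pi.single j (1:ℝ) : Fin n → ℝ)‖ = 1 := by
    rw [Pi.norm_single]; norm_num
  set v : Fin n → ℝ := Pi.single j (1:ℝ) with hv
  set M : ℝ := Cjj * 2 ^ N / (1 + ‖x‖) ^ N with hM_def
  have hMbound : ∀ t ∈ Set.Icc (-1:ℝ) 1, |pd j (pd j ⇑ρ) (x + t • v)| ≤ M := by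
    intro t ht
    have hdist : ‖(x + t • v) - x‖ ≤ 1 := by
      have h5 : ‖t • v‖ = |t| := by rw [norm_smul, hnorm_e, Real.norm_eq_abs, mul_one]
      simp only [add_sub_cancel_left]
      rw [h5, abs_le]
      exact ⟨ht.1, ht.2⟩
    have h1 : pd j (pd j ⇑ρ) (x + t • v)
        = (LineDeriv.lineDerivOpCLM ℝ (SchwartzMap (Fin n → ℝ) ℝ) (V := Fin n → ℝ) (F := SchwartzMap (Fin n → ℝ) ℝ) v (LineDeriv.lineDerivOpCLM ℝ (SchwartzMap (Fin n → ℝ) ℝ) (V := Fin n → ℝ) (F := SchwartzMap (Fin n → ℝ) ℝ) v ρ)) (x + t • v) := by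
      rw [pd_eq_pderiv ρ j, pd_eq_pderiv (LineDeriv.lineDerivOpCLM ℝ (SchwartzMap (Fin n → ℝ) ℝ) (V := Fin n → ℝ) (F := SchwartzMap (Fin n → ℝ) ℝ) v ρ) j]
    rw [h1]
    refine (hCjj _).trans ?_
    have h6 := env_comp hCpos N (x := x) (y := x + t • v) hdist
    simpa using h6
  have h := landau (f := fun t : ℝ => ρ (x + t • v))
    (f' := fun t : ℝ => pd j ⇑ρ (x + t • v))
    (f'' := fun t : ℝ => pd j (pd j ⇑ρ) (x + t • v))
    (fun t _ => line_hasDerivAt (Helper.diff_of_top hρs) x v t)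
    (fun t _ => line_hasDerivAt (Helper.diff_of_top (Helper.contDiff_pd hρs j)) x v t)
    (fun t _ => (hρ0 _).le)
    (M := M) hMbound
  simp only [zero_smul, add_zero] at h
  exact h

lemma FF_decay (ρ : SchwartzMap (Fin n → ℝ) ℝ) (hρ0 : ∀ x, 0 < ρ x) (k i : Fin n) (N : ℕ) :
    ∃ C : ℝ, 0 < C ∧ ∀ x, |FF (⇑ρ) k i x| ≤ C / (1 + ‖x‖) ^ N := by
  obtain ⟨C2, hC2pos, hC2⟩ := schwartz_bound
    (LineDeriv.lineDerivOpCLM ℝ (SchwartzMap (Fin n → ℝ) ℝ) (V := Fin n → ℝ) (F := SchwartzMap (Fin n → ℝ) ℝ) (Pi.single i (1:ℝ)) (LineDeriv.lineDerivOpCLM ℝ (SchwartzMap (Fin n → ℝ) ℝ) (V := Fin n → ℝ) (F := SchwartzMap (Fin n → ℝ) ℝ) (Pi.single k (1:ℝ)) ρ)) N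
  obtain ⟨Cii, hCiipos, hCii⟩ := schwartz_bound
    (LineDeriv.lineDerivOpCLM ℝ (SchwartzMap (Fin n → ℝ) ℝ) (V := Fin n → ℝ) (F := SchwartzMap (Fin n → ℝ) ℝ) (Pi.single i (1:ℝ)) (LineDeriv.lineDerivOpCLM ℝ (SchwartzMap (Fin n → ℝ) ℝ) (V := Fin n → ℝ) (F := SchwartzMap (Fin n → ℝ) ℝ) (Pi.single i (1:ℝ)) ρ)) N
  obtain ⟨Ckk, hCkkpos, hCkk⟩ := schwartz_bound
    (LineDeriv.lineDerivOpCLM ℝ (SchwartzMap (Fin n → ℝ) ℝ) (V := Fin n → ℝ) (F := SchwartzMap (Fin n → ℝ) ℝ) (Pi.single k (1:ℝ)) (LineDeriv.lineDerivOpCLM ℝ (SchwartzMap (Fin n → ℝ) ℝ) (V := Fin n → ℝ) (F := SchwartzMap (Fin n → ℝ) ℝ) (Pi.single k (1:ℝ)) ρ)) N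
  obtain ⟨C0, hC0pos, hC0⟩ := schwartz_bound ρ N
  refine ⟨C2 / 2 + (Cii * 2 ^ N + Ckk * 2 ^ N + 2 * C0), by positivity, fun x => ?_⟩
  set r : ℝ := ρ x with hr_def
  have hr : 0 < r := hρ0 x
  set a : ℝ := pd i ⇑ρ x with ha_def
  set b : ℝ := pd k ⇑ρ x with hb_def
  set Mi : ℝ := Cii * 2 ^ N / (1 + ‖x‖) ^ N with hMi_def
  set Mk : ℝ := Ckk * 2 ^ N / (1 + ‖x‖) ^ N with hMk_def
  have hx0 : (0:ℝ) < (1 + ‖x‖) ^ N := by positivity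
  have hai : a ^ 2 ≤ 4 * r * (Mi + r) := pd_sq_le ρ hρ0 i hCiipos N hCii x
  have hbk : b ^ 2 ≤ 4 * r * (Mk + r) := pd_sq_le ρ hρ0 k hCkkpos N hCkk x
  have habs : |a * b| ≤ (a ^ 2 + b ^ 2) / 2 := by
    rw [abs_mul]
    nlinarith [sq_nonneg (|a| - |b|), sq_abs a, sq_abs b, abs_nonneg a, abs_nonneg b]
  have hterm2 : |a * b| / (2 * r) ≤ Mi + Mk + 2 * r := by
    rw [div_le_iff₀ (by positivity)]
    nlinarith
  have hterm1 : |pd i (pd k ⇑ρ) x| ≤ C2 / (1 + ‖x‖) ^ N := by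
    rw [pd_eq_pderiv ρ k, pd_eq_pderiv (LineDeriv.lineDerivOpCLM ℝ (SchwartzMap (Fin n → ℝ) ℝ) (V := Fin n → ℝ) (F := SchwartzMap (Fin n → ℝ) ℝ) (Pi.single k (1:ℝ)) ρ) i]
    exact hC2 x
  have hFF : |FF (⇑ρ) k i x| ≤ |pd i (pd k ⇑ρ) x| / 2 + |a * b| / (2 * r) := by
    have h7 : FF (⇑ρ) k i x = pd i (pd k ⇑ρ) x / 2 - a * b / (2 * r) := rfl
    rw [h7]
    calc |pd i (pd k ⇑ρ) x / 2 - a * b / (2 * r)|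
        ≤ |pd i (pd k ⇑ρ) x / 2| + |a * b / (2 * r)| := abs_sub _ _
      _ = |pd i (pd k ⇑ρ) x| / 2 + |a * b| / (2 * r) := by
          rw [abs_div, abs_div, abs_of_pos (show (0:ℝ) < 2 * r by positivity),
            abs_of_pos (show (0:ℝ) < (2:ℝ) by norm_num)]
  refine hFF.trans ?_
  have hrx : r ≤ C0 / (1 + ‖x‖) ^ N := by
    have := hC0 x
    calc r ≤ |r| := le_abs_self r
      _ ≤ C0 / (1 + ‖x‖) ^ N := this
  have hMiMk : Mi + Mk + 2 * r
      ≤ (Cii * 2 ^ N + Ckk * 2 ^ N + 2 * C0) / (1 + ‖x‖) ^ N := by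
    have h2r : 2 * r ≤ 2 * C0 / (1 + ‖x‖) ^ N := by
      rw [mul_div_assoc]
      linarith
    have hsplit : (Cii * 2 ^ N + Ckk * 2 ^ N + 2 * C0) / (1 + ‖x‖) ^ N
        = Cii * 2 ^ N / (1 + ‖x‖) ^ N + Ckk * 2 ^ N / (1 + ‖x‖) ^ N
          + 2 * C0 / (1 + ‖x‖) ^ N := by ring
    rw [hsplit, hMi_def, hMk_def]
    linarith
  have e1 : |pd i (pd k ⇑ρ) x| / 2 ≤ (C2 / (1 + ‖x‖) ^ N) / 2 := by linarith
  have e2 : |a * b| / (2 * r)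
      ≤ (Cii * 2 ^ N + Ckk * 2 ^ N + 2 * C0) / (1 + ‖x‖) ^ N := hterm2.trans hMiMk
  calc |pd i (pd k ⇑ρ) x| / 2 + |a * b| / (2 * r)
      ≤ (C2 / (1 + ‖x‖) ^ N) / 2 + (Cii * 2 ^ N + Ckk * 2 ^ N + 2 * C0) / (1 + ‖x‖) ^ N :=
        add_le_add e1 e2
    _ = (C2 / 2 + (Cii * 2 ^ N + Ckk * 2 ^ N + 2 * C0)) / (1 + ‖x‖) ^ N := by
        ring

end Decay

-- final assembly
section Final
open Helper Filter MeasureTheory Topology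

variable {n : ℕ}

lemma face_bound {m' : ℕ} (H : (Fin (m' + 1) → ℝ) → ℝ) (R : ℕ) {CC : ℝ} (hCC : 0 < CC)
    (hH : ∀ z, |H z| ≤ CC / (1 + ‖z‖) ^ (m' + 2))
    (i : Fin (m' + 1)) {r : ℝ} (hr : |r| = (R : ℝ) + 1) :
    ‖∫ y in Set.Icc (fun _ : Fin m' => -((R:ℝ)+1)) (fun _ : Fin m' => ((R:ℝ)+1)),
        H (Fin.insertNth (α := fun _ : Fin (m'+1) => ℝ) i r y)‖ ≤ 2 ^ (m' + 1) * CC / ((R : ℝ) + 1) := by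
  have hRpos : (0:ℝ) < (R:ℝ) + 1 := by positivity
  have hle : (fun _ : Fin m' => -((R:ℝ)+1)) ≤ (fun _ : Fin m' => ((R:ℝ)+1)) := by
    intro j; simp; linarith
  have hvol : (volume (Set.Icc (fun _ : Fin m' => -((R:ℝ)+1))
      (fun _ : Fin m' => ((R:ℝ)+1)))).toReal = (2 * ((R:ℝ)+1)) ^ m' := by
    rw [Real.volume_Icc_pi_toReal hle]
    simp [Finset.prod_const]
    ring_nf
  have hsup : ∀ y ∈ Set.Icc (fun _ : Fin m' => -((R:ℝ)+1)) (fun _ : Fin m' => ((R:ℝ)+1)),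
      ‖H (Fin.insertNth (α := fun _ : Fin (m'+1) => ℝ) i r y)‖ ≤ CC / ((R:ℝ) + 2) ^ (m' + 2) := by
    intro y _
    have h1 : ((R:ℝ) + 1) ≤ ‖Fin.insertNth (α := fun _ : Fin (m'+1) => ℝ) i r y‖ := by
      have h2 : |(Fin.insertNth (α := fun _ : Fin (m'+1) => ℝ) i r y) i| ≤ ‖Fin.insertNth (α := fun _ : Fin (m'+1) => ℝ) i r y‖ := by
        simpa [Real.norm_eq_abs] using norm_le_pi_norm (Fin.insertNth (α := fun _ : Fin (m'+1) => ℝ) i r y) i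
      rw [Fin.insertNth_apply_same] at h2
      rw [hr] at h2
      exact h2
    refine (hH _).trans ?_
    have hp1 : (0:ℝ) < ((R:ℝ)+2) ^ (m'+2) := by positivity
    have hp2 : ((R:ℝ)+2) ^ (m'+2)
        ≤ (1 + ‖Fin.insertNth (α := fun _ : Fin (m'+1) => ℝ) i r y‖) ^ (m'+2) := by
      apply pow_le_pow_left₀ (by linarith) (by linarith)
    exact div_le_div_of_nonneg_left hCC.le hp1 hp2
  have h3 := norm_setIntegral_le_of_norm_le_const (μ := volume)
    (C := CC / ((R:ℝ) + 2) ^ (m' + 2))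
    ((isCompact_Icc).measure_lt_top)
    hsup
  rw [measureReal_def, hvol] at h3
  refine h3.trans ?_
  have h4 : (2 * ((R:ℝ) + 1)) ^ m' ≤ 2 ^ m' * ((R:ℝ) + 2) ^ m' := by
    rw [← mul_pow]
    apply pow_le_pow_left₀ (by linarith) (by linarith)
  have e1 : CC / ((R:ℝ)+2) ^ (m'+2) * (2 * ((R:ℝ)+1)) ^ m'
      ≤ CC / ((R:ℝ)+2) ^ (m'+2) * (2 ^ m' * ((R:ℝ)+2) ^ m') :=
    mul_le_mul_of_nonneg_left h4 (by positivity)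
  have e2 : CC / ((R:ℝ)+2) ^ (m'+2) * (2 ^ m' * ((R:ℝ)+2) ^ m')
      = 2 ^ m' * CC / ((R:ℝ)+2) ^ 2 := by
    have hpow : ((R:ℝ)+2) ^ (m'+2) = ((R:ℝ)+2) ^ m' * ((R:ℝ)+2) ^ 2 := by
      rw [← pow_add]
    rw [hpow]
    have hne : ((R:ℝ)+2) ^ m' ≠ 0 := by positivity
    have hne2 : (((R:ℝ)+2) ^ 2 : ℝ) ≠ 0 := by positivity
    field_simp
  have e3 : 2 ^ m' * CC / ((R:ℝ)+2) ^ 2 ≤ 2 ^ (m'+1) * CC / ((R:ℝ)+1) := by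
    rw [div_le_div_iff₀ (by positivity) (by positivity)]
    have hR2 : ((R:ℝ)+1) ≤ ((R:ℝ)+2) ^ 2 := by nlinarith [Nat.cast_nonneg' (α := ℝ) R]
    calc 2 ^ m' * CC * ((R:ℝ)+1) ≤ 2 ^ m' * CC * ((R:ℝ)+2) ^ 2 :=
          mul_le_mul_of_nonneg_left hR2 (by positivity)
      _ ≤ 2 ^ (m'+1) * CC * ((R:ℝ)+2) ^ 2 := by
          apply mul_le_mul_of_nonneg_right ?_ (by positivity)
          have h7 : (2:ℝ) ^ m' ≤ 2 ^ (m'+1) := by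
            apply pow_le_pow_right₀ (by norm_num) (by omega)
          exact mul_le_mul_of_nonneg_right h7 hCC.le
  exact e1.trans ((le_of_eq e2).trans e3)

/-- vanishing of the average quantum force: for a strictly positive
Schwartz probability density `ρ` and `Q := −(ħ²/2m)(Δ√ρ)/√ρ`, one has
`∫ ρ ∇Q = 0`. -/
theorem stmt_14 {n : ℕ} (ℏ m : ℝ) (hℏ : 0 < ℏ) (hm : 0 < m)
    (ρ : SchwartzMap (Fin n → ℝ) ℝ)
    (hρ0 : ∀ x, 0 < ρ x)
    (hρ1 : ∫ x : Fin n → ℝ, ρ x = 1)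
    (Q : (Fin n → ℝ) → ℝ)
    (hQ : ∀ x, Q x = -(ℏ ^ 2 / (2 * m)) *
      ((∑ i, pd i (fun z => pd i (fun w => Real.sqrt (ρ w)) z) x)
        / Real.sqrt (ρ x))) :
    ∀ k : Fin n, ∫ x : Fin n → ℝ, ρ x * pd k Q x = 0 := by
  intro k
  by_cases hInt : Integrable (fun x : Fin n → ℝ => ρ x * pd k Q x) volume
  swap
  · exact integral_undef hInt
  obtain ⟨m', rfl⟩ : ∃ m', n = m' + 1 := ⟨n - 1, by have := k.pos; omega⟩
  have hρs : ContDiff ℝ (⊤:ℕ∞) ⇑ρ := ρ.smooth ⊤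
  have hcpos : (0:ℝ) < ℏ ^ 2 / (2 * m) := by positivity
  have hkey : ∀ x, ρ x * pd k Q x
      = (-(ℏ ^ 2 / (2 * m))) * ∑ i, pd i (FF (⇑ρ) k i) x :=
    fun x => key_pointwise ℏ m ρ hρ0 Q hQ k x
  set G : (Fin (m'+1) → ℝ) → ℝ := fun x => ∑ i, pd i (FF (⇑ρ) k i) x with hG_def
  have hGeq : (fun x => (-(ℏ ^ 2 / (2 * m)))⁻¹ * (ρ x * pd k Q x)) = G := by
    funext x
    rw [hkey x, hG_def]
    field_simp
  have hGint : Integrable G := by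
    rw [← hGeq]
    exact hInt.const_mul _
  have hIG : ∫ x, ρ x * pd k Q x = (-(ℏ ^ 2 / (2 * m))) * ∫ x, G x := by
    rw [← integral_const_mul]
    congr 1
    funext x
    exact hkey x
  -- smoothness of the vector field
  have hFFsmooth : ∀ i, ContDiff ℝ (⊤:ℕ∞) (FF (⇑ρ) k i) := by
    intro i
    have h1 : ContDiff ℝ (⊤:ℕ∞) (fun y => pd i (pd k ⇑ρ) y / 2) :=
      (contDiff_pd (contDiff_pd hρs k) i).div_const 2
    have h2 : ContDiff ℝ (⊤:ℕ∞) (fun y => pd i ⇑ρ y * pd k ⇑ρ y) :=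
      (contDiff_pd hρs i).mul (contDiff_pd hρs k)
    have h3 : ContDiff ℝ (⊤:ℕ∞) (fun y => (2:ℝ) * ρ y) := contDiff_const.mul hρs
    have h4 : ∀ y, (2:ℝ) * ρ y ≠ 0 := fun y => by have := hρ0 y; positivity
    exact h1.sub (h2.div h3 h4)
  -- divergence theorem on boxes
  have hdiv : ∀ R : ℕ, ∫ x in Set.Icc (fun _ : Fin (m'+1) => -((R:ℝ)+1))
        (fun _ : Fin (m'+1) => ((R:ℝ)+1)), G x
      = ∑ i : Fin (m'+1),
        ((∫ y in Set.Icc ((fun _ : Fin (m'+1) => -((R:ℝ)+1)) ∘ i.succAbove)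
            ((fun _ : Fin (m'+1) => ((R:ℝ)+1)) ∘ i.succAbove),
            FF (⇑ρ) k i (i.insertNth ((R:ℝ)+1) y))
        - ∫ y in Set.Icc ((fun _ : Fin (m'+1) => -((R:ℝ)+1)) ∘ i.succAbove)
            ((fun _ : Fin (m'+1) => ((R:ℝ)+1)) ∘ i.succAbove),
            FF (⇑ρ) k i (i.insertNth (-((R:ℝ)+1)) y)) := by
    intro R
    exact MeasureTheory.integral_divergence_of_hasFDerivAt_off_countable'
      (fun _ => -((R:ℝ)+1)) (fun _ => ((R:ℝ)+1))
      (fun j => by simp; linarith [Nat.cast_nonneg (α := ℝ) R])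
      (fun i => FF (⇑ρ) k i)
      (fun i x => fderiv ℝ (FF (⇑ρ) k i) x) ∅ Set.countable_empty
      (fun i => (hFFsmooth i).continuous.continuousOn)
      (fun x _ i => ((diff_of_top (hFFsmooth i)) x).hasFDerivAt)
      hGint.integrableOn
  -- limit along boxes equals the full integral
  have hmono : Monotone (fun R : ℕ => Set.Icc (fun _ : Fin (m'+1) => -((R:ℝ)+1))
      (fun _ : Fin (m'+1) => ((R:ℝ)+1))) := by
    intro R S hRS
    have hRS' : ((R:ℝ)) ≤ (S:ℝ) := Nat.cast_le.2 hRS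
    apply Set.Icc_subset_Icc <;> intro j <;> simp <;> linarith
  have hunion : (⋃ R : ℕ, Set.Icc (fun _ : Fin (m'+1) => -((R:ℝ)+1))
      (fun _ : Fin (m'+1) => ((R:ℝ)+1))) = Set.univ := by
    ext x
    simp only [Set.mem_iUnion, Set.mem_univ, iff_true, Set.mem_Icc]
    obtain ⟨R, hR⟩ := exists_nat_ge ‖x‖
    refine ⟨R, ?_, ?_⟩ <;> intro j <;>
      have h1 : |x j| ≤ ‖x‖ := by
        simpa [Real.norm_eq_abs] using norm_le_pi_norm x j
    · have h2 := (abs_le.1 h1).1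
      simp only
      linarith
    · have h2 := (abs_le.1 h1).2
      simp only
      linarith
  have hlim1 : Filter.Tendsto (fun R : ℕ => ∫ x in Set.Icc
      (fun _ : Fin (m'+1) => -((R:ℝ)+1)) (fun _ : Fin (m'+1) => ((R:ℝ)+1)), G x)
      Filter.atTop (𝓝 (∫ x, G x)) := by
    have h := MeasureTheory.tendsto_setIntegral_of_monotone
      (fun R : ℕ => measurableSet_Icc) hmono
      (by rw [hunion]; exact hGint.integrableOn)
    rw [hunion] at h
    simpa using h
  -- limit is zero by decay
  choose Cd hCdpos hCd using fun i : Fin (m'+1) => FF_decay ρ hρ0 k i (m' + 2)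
  have hbound : ∀ R : ℕ, ‖∫ x in Set.Icc (fun _ : Fin (m'+1) => -((R:ℝ)+1))
      (fun _ : Fin (m'+1) => ((R:ℝ)+1)), G x‖
      ≤ (∑ i : Fin (m'+1), 2 * (2 ^ (m'+1) * Cd i)) * (1 / ((R:ℝ)+1)) := by
    intro R
    rw [hdiv R]
    refine (norm_sum_le _ _).trans ?_
    rw [Finset.sum_mul]
    apply Finset.sum_le_sum
    intro i _
    have hfront := face_bound (FF (⇑ρ) k i) R (hCdpos i) (hCd i) i
      (r := ((R:ℝ)+1)) (by rw [abs_of_pos]; positivity)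
    have hback := face_bound (FF (⇑ρ) k i) R (hCdpos i) (hCd i) i
      (r := -((R:ℝ)+1)) (by rw [abs_neg, abs_of_pos]; positivity)
    calc ‖(∫ y in Set.Icc ((fun _ : Fin (m'+1) => -((R:ℝ)+1)) ∘ i.succAbove)
            ((fun _ : Fin (m'+1) => ((R:ℝ)+1)) ∘ i.succAbove),
            FF (⇑ρ) k i (i.insertNth ((R:ℝ)+1) y))
        - ∫ y in Set.Icc ((fun _ : Fin (m'+1) => -((R:ℝ)+1)) ∘ i.succAbove)
            ((fun _ : Fin (m'+1) => ((R:ℝ)+1)) ∘ i.succAbove),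
            FF (⇑ρ) k i (i.insertNth (-((R:ℝ)+1)) y)‖
        ≤ 2 ^ (m'+1) * Cd i / ((R:ℝ)+1) + 2 ^ (m'+1) * Cd i / ((R:ℝ)+1) :=
          (norm_sub_le _ _).trans (add_le_add hfront hback)
      _ = 2 * (2 ^ (m'+1) * Cd i) * (1 / ((R:ℝ)+1)) := by ring
  have hlim2 : Filter.Tendsto (fun R : ℕ => ∫ x in Set.Icc
      (fun _ : Fin (m'+1) => -((R:ℝ)+1)) (fun _ : Fin (m'+1) => ((R:ℝ)+1)), G x)
      Filter.atTop (𝓝 0) := by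
    apply squeeze_zero_norm hbound
    have h := tendsto_one_div_add_atTop_nhds_zero_nat.const_mul
      (∑ i : Fin (m'+1), 2 * (2 ^ (m'+1) * Cd i))
    simpa using h
  have hG0 : ∫ x, G x = 0 := tendsto_nhds_unique hlim1 hlim2
  rw [hIG, hG0, mul_zero]

end Final
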